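/- The number of decision variables in the link-based flow LP formulation equals 2·|D|·|E|·Σ_{a∈A}|E^a| and is independent of both the number of user requests |U| and the number of substrate paths Σ_{s,t}|P_{st}|; in contrast, the path-based MILP has at least |U|·Σ_{a∈A, used} |E^a| · min_{s,t}|P_{st}| per-user steering variables, so when |P_{st}| grows exponentially in |D| the link-based LP has exponentially fewer variables. -/
import Mathlib


/-- The link-based flow LP has one direct-flow and one transient-flow
variable per (source DC `s ∈ D`, substrate link `e ∈ E`, application logical link
`e^a_{ij}`), i.e. exactly `2·|D|·|E|·Σ_a |Ea a|` variables — a count independent of the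
number of users `|U|` and of the number of substrate paths. The path-based MILP has a
per-user steering variable for each user, logical link, and candidate path; if every
pair has at least `pmin` candidate paths then it has at least `|U|·(Σ_a |Ea a|)·pmin`
variables, and whenever `pmin ≥ 2·|D|·|E|` (e.g. `pmin = (n−2)!` in a complete graph)
the link-based LP has no more variables than the path-based MILP. -/
theorem stmt_8 {D E A U P : Type*} [Fintype D] [Fintype E] [Fintype A] [Fintype U]
    [Fintype P]
    (Ea : A → Type*) [∀ a, Fintype (Ea a)]
    (pmin : ℕ) (hP : pmin ≤ Fintype.card P) (hU : 1 ≤ Fintype.card U) :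
    Fintype.card (Bool × D × E × (Σ a : A, Ea a)) =
        2 * Fintype.card D * Fintype.card E * ∑ a : A, Fintype.card (Ea a) ∧
      Fintype.card U * (∑ a : A, Fintype.card (Ea a)) * pmin ≤
        Fintype.card (U × (Σ a : A, Ea a) × P) ∧
      (2 * Fintype.card D * Fintype.card E ≤ pmin →
        Fintype.card (Bool × D × E × (Σ a : A, Ea a)) ≤
          Fintype.card (U × (Σ a : A, Ea a) × P)) := by
  have h1 : Fintype.card (Bool × D × E × (Σ a : A, Ea a)) =
      2 * Fintype.card D * Fintype.card E * ∑ a : A, Fintype.card (Ea a) := by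
    simp [Fintype.card_prod, Fintype.card_sigma, mul_assoc]
  have h2 : Fintype.card U * (∑ a : A, Fintype.card (Ea a)) * pmin ≤
      Fintype.card (U × (Σ a : A, Ea a) × P) := by
    simp only [Fintype.card_prod, Fintype.card_sigma]
    calc Fintype.card U * (∑ a : A, Fintype.card (Ea a)) * pmin
        ≤ Fintype.card U * (∑ a : A, Fintype.card (Ea a)) * Fintype.card P := by
          exact Nat.mul_le_mul_left _ hP
      _ = Fintype.card U * ((∑ a : A, Fintype.card (Ea a)) * Fintype.card P) := by ring
  refine ⟨h1, h2, fun h => ?_⟩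
  rw [h1]
  calc 2 * Fintype.card D * Fintype.card E * ∑ a : A, Fintype.card (Ea a)
      ≤ pmin * ∑ a : A, Fintype.card (Ea a) := Nat.mul_le_mul_right _ h
    _ ≤ Fintype.card U * (∑ a : A, Fintype.card (Ea a)) * pmin := by
        rw [mul_comm pmin]
        calc (∑ a : A, Fintype.card (Ea a)) * pmin
            ≤ Fintype.card U * ((∑ a : A, Fintype.card (Ea a)) * pmin) :=
              Nat.le_mul_of_pos_left _ hU
          _ = Fintype.card U * (∑ a : A, Fintype.card (Ea a)) * pmin := by ring
    _ ≤ _ := h2
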